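/- Suppose f : (0,1] → ℝ is Lebesgue measurable, satisfies f(xy) + f((1-x)y) - f(y) = (f(x) + f(1-x))·y for all x ∈ (0,1), y ∈ (0,1], and lim_{x→1⁻} f(x) = f(1). Then there exists c ∈ ℝ such that f(x) = c·x·ln(x) for all x ∈ (0,1]. -/

import Mathlib

open Real Set

namespace Stmt7Aux

noncomputable def gg (f : ℝ → ℝ) : ℝ → ℝ := fun x => f x / x

noncomputable def HH (f : ℝ → ℝ) : ℝ → ℝ → ℝ :=
  fun x y => gg f (x * y) - gg f x - gg f y

variable {f : ℝ → ℝ}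

lemma f1zero
    (hf : ∀ x ∈ Set.Ioo (0:ℝ) 1, ∀ y ∈ Set.Ioc (0:ℝ) 1,
      f (x * y) + f ((1 - x) * y) - f y = (f x + f (1 - x)) * y) :
    f 1 = 0 := by
  have h := hf (1/2) (by norm_num) 1 (by norm_num)
  norm_num at h
  linarith

lemma mem_Ioc_mul {x y : ℝ} (hx : x ∈ Set.Ioc (0:ℝ) 1) (hy : y ∈ Set.Ioc (0:ℝ) 1) :
    x * y ∈ Set.Ioc (0:ℝ) 1 :=
  ⟨mul_pos hx.1 hy.1, mul_le_one₀ hx.2 hy.1.le hy.2⟩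

lemma mem_Ioc_half {y : ℝ} (hy : y ∈ Set.Ioc (0:ℝ) 1) : y / 2 ∈ Set.Ioc (0:ℝ) 1 :=
  ⟨div_pos hy.1 two_pos, by nlinarith [hy.2, hy.1]⟩

lemma mem_Ioc_third {y : ℝ} (hy : y ∈ Set.Ioc (0:ℝ) 1) : y / 3 ∈ Set.Ioc (0:ℝ) 1 :=
  ⟨div_pos hy.1 three_pos, by nlinarith [hy.2, hy.1]⟩

lemma hsum
    (hf : ∀ x ∈ Set.Ioo (0:ℝ) 1, ∀ y ∈ Set.Ioc (0:ℝ) 1,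
      f (x * y) + f ((1 - x) * y) - f y = (f x + f (1 - x)) * y) :
    ∀ x ∈ Set.Ioo (0:ℝ) 1, ∀ y ∈ Set.Ioc (0:ℝ) 1,
      x * HH f x y + (1 - x) * HH f (1 - x) y = 0 := by
  intro x hx y hy
  have h := hf x hx y hy
  have hx0 : x ≠ 0 := ne_of_gt hx.1
  have hx1 : 1 - x ≠ 0 := by have := hx.2; intro h'; nlinarith
  have hy0 : y ≠ 0 := ne_of_gt hy.1
  have e1 : x * HH f x y = f (x*y)/y - f x - x * f y / y := by
    simp only [HH, gg]; field_simp
  have e2 : (1-x) * HH f (1-x) y = f ((1-x)*y)/y - f (1-x) - (1-x) * f y / y := by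
    simp only [HH, gg]; field_simp
  rw [e1, e2]
  field_simp
  rw [mul_comm y (1 - x)]; linarith [h]

lemma cocycle (f : ℝ → ℝ) (a b c : ℝ) :
    HH f (a * b) c + HH f a b = HH f a (b * c) + HH f b c := by
  simp only [HH, mul_assoc]
  ring

lemma Hsym (f : ℝ → ℝ) (a b : ℝ) : HH f a b = HH f b a := by
  simp only [HH]
  rw [mul_comm a b]
  ring

lemma Hhalf
    (hf : ∀ x ∈ Set.Ioo (0:ℝ) 1, ∀ y ∈ Set.Ioc (0:ℝ) 1,
      f (x * y) + f ((1 - x) * y) - f y = (f x + f (1 - x)) * y) :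
    ∀ y ∈ Set.Ioc (0:ℝ) 1, HH f (1/2) y = 0 := by
  intro y hy
  have h := hsum hf (1/2) (by norm_num) y hy
  norm_num at h
  linarith

lemma h2inv
    (hf : ∀ x ∈ Set.Ioo (0:ℝ) 1, ∀ y ∈ Set.Ioc (0:ℝ) 1,
      f (x * y) + f ((1 - x) * y) - f y = (f x + f (1 - x)) * y) :
    ∀ y ∈ Set.Ioc (0:ℝ) 1, ∀ z ∈ Set.Ioc (0:ℝ) 1, HH f (y / 2) z = HH f y z := by
  intro y hy z hz
  have h := cocycle f (1/2) y z
  rw [Hhalf hf y hy, Hhalf hf (y * z) (mem_Ioc_mul hy hz)] at h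
  rw [show (1:ℝ)/2 * y = y / 2 by ring] at h
  linarith

lemma Hthird
    (hf : ∀ x ∈ Set.Ioo (0:ℝ) 1, ∀ y ∈ Set.Ioc (0:ℝ) 1,
      f (x * y) + f ((1 - x) * y) - f y = (f x + f (1 - x)) * y) :
    ∀ y ∈ Set.Ioc (0:ℝ) 1, HH f (1/3) y = 0 := by
  intro y hy
  have h := hsum hf (1/3) (by norm_num) y hy
  norm_num at h
  have h2 := h2inv hf (2/3) (by norm_num) y hy
  norm_num at h2
  linarith

lemma h3inv
    (hf : ∀ x ∈ Set.Ioo (0:ℝ) 1, ∀ y ∈ Set.Ioc (0:ℝ) 1,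
      f (x * y) + f ((1 - x) * y) - f y = (f x + f (1 - x)) * y) :
    ∀ y ∈ Set.Ioc (0:ℝ) 1, ∀ z ∈ Set.Ioc (0:ℝ) 1, HH f (y / 3) z = HH f y z := by
  intro y hy z hz
  have h := cocycle f (1/3) y z
  rw [Hthird hf y hy, Hthird hf (y * z) (mem_Ioc_mul hy hz)] at h
  rw [show (1:ℝ)/3 * y = y / 3 by ring] at h
  linarith

lemma mem_Ioc_div_pow2 {y : ℝ} (hy : y ∈ Set.Ioc (0:ℝ) 1) (m : ℕ) :
    y / 2 ^ m ∈ Set.Ioc (0:ℝ) 1 := by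
  constructor
  · exact div_pos hy.1 (by positivity)
  · have h1 : (1:ℝ) ≤ 2 ^ m := one_le_pow₀ (by norm_num)
    calc y / 2 ^ m ≤ y / 1 := by
          apply div_le_div_of_nonneg_left hy.1.le (by norm_num) h1
      _ = y := by ring
      _ ≤ 1 := hy.2

lemma mem_Ioc_div_pow3 {y : ℝ} (hy : y ∈ Set.Ioc (0:ℝ) 1) (n : ℕ) :
    y / 3 ^ n ∈ Set.Ioc (0:ℝ) 1 := by
  constructor
  · exact div_pos hy.1 (by positivity)
  · have h1 : (1:ℝ) ≤ 3 ^ n := one_le_pow₀ (by norm_num)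
    calc y / 3 ^ n ≤ y / 1 := by
          apply div_le_div_of_nonneg_left hy.1.le (by norm_num) h1
      _ = y := by ring
      _ ≤ 1 := hy.2

lemma h2pow
    (hf : ∀ x ∈ Set.Ioo (0:ℝ) 1, ∀ y ∈ Set.Ioc (0:ℝ) 1,
      f (x * y) + f ((1 - x) * y) - f y = (f x + f (1 - x)) * y) :
    ∀ m : ℕ, ∀ y ∈ Set.Ioc (0:ℝ) 1, ∀ z ∈ Set.Ioc (0:ℝ) 1,
      HH f (y / 2 ^ m) z = HH f y z := by
  intro m
  induction m with
  | zero => intro y hy z hz; norm_num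
  | succ m ih =>
    intro y hy z hz
    have e : y / 2 ^ (m + 1) = (y / 2) / 2 ^ m := by
      rw [div_div, pow_succ]; ring_nf
    rw [e, ih (y / 2) (mem_Ioc_half hy) z hz, h2inv hf y hy z hz]

lemma h3pow
    (hf : ∀ x ∈ Set.Ioo (0:ℝ) 1, ∀ y ∈ Set.Ioc (0:ℝ) 1,
      f (x * y) + f ((1 - x) * y) - f y = (f x + f (1 - x)) * y) :
    ∀ n : ℕ, ∀ y ∈ Set.Ioc (0:ℝ) 1, ∀ z ∈ Set.Ioc (0:ℝ) 1,
      HH f (y / 3 ^ n) z = HH f y z := by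
  intro n
  induction n with
  | zero => intro y hy z hz; norm_num
  | succ n ih =>
    intro y hy z hz
    have e : y / 3 ^ (n + 1) = (y / 3) / 3 ^ n := by
      rw [div_div, pow_succ]; ring_nf
    rw [e, ih (y / 3) (mem_Ioc_third hy) z hz, h3inv hf y hy z hz]

lemma hpow
    (hf : ∀ x ∈ Set.Ioo (0:ℝ) 1, ∀ y ∈ Set.Ioc (0:ℝ) 1,
      f (x * y) + f ((1 - x) * y) - f y = (f x + f (1 - x)) * y) :
    ∀ m n : ℕ, ∀ y ∈ Set.Ioc (0:ℝ) 1, ∀ z ∈ Set.Ioc (0:ℝ) 1,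
      HH f (y / 2 ^ m / 3 ^ n) z = HH f y z := by
  intro m n y hy z hz
  rw [h3pow hf n (y / 2 ^ m) (mem_Ioc_div_pow2 hy m) z hz, h2pow hf m y hy z hz]

/-- the subgroup generated by log 2, log 3 is dense -/
lemma log23_dense :
    Dense ((AddSubgroup.closure {Real.log 2, Real.log 3} : AddSubgroup ℝ) : Set ℝ) := by
  rcases (AddSubgroup.closure {Real.log 2, Real.log 3}).dense_or_cyclic with h | ⟨a, ha⟩
  · exact h
  · exfalso
    have l2 : (0:ℝ) < Real.log 2 := Real.log_pos (by norm_num)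
    have l3 : (0:ℝ) < Real.log 3 := Real.log_pos (by norm_num)
    have h2 : Real.log 2 ∈ AddSubgroup.closure ({Real.log 2, Real.log 3} : Set ℝ) :=
      AddSubgroup.subset_closure (by simp)
    have h3 : Real.log 3 ∈ AddSubgroup.closure ({Real.log 2, Real.log 3} : Set ℝ) :=
      AddSubgroup.subset_closure (by simp)
    rw [ha, AddSubgroup.mem_closure_singleton] at h2 h3
    obtain ⟨k, hk⟩ := h2
    obtain ⟨l, hl⟩ := h3
    have key : (l : ℝ) * Real.log 2 = (k : ℝ) * Real.log 3 := by
      rw [← hk, ← hl]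
      push_cast [zsmul_eq_mul]
      ring
    have hk0 : k ≠ 0 := by
      rintro rfl
      simp at hk
      exact absurd hk.symm (ne_of_gt l2)
    have hl0 : l ≠ 0 := by
      rintro rfl
      simp at hl
      exact absurd hl.symm (ne_of_gt l3)
    -- pass to absolute values
    have keyabs : (l.natAbs : ℝ) * Real.log 2 = (k.natAbs : ℝ) * Real.log 3 := by
      have h := congrArg abs key
      rw [abs_mul, abs_mul, abs_of_pos l2, abs_of_pos l3] at h
      rw [Nat.cast_natAbs, Nat.cast_natAbs, Int.cast_abs, Int.cast_abs]
      exact h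
    have hexp : ((2:ℝ)) ^ l.natAbs = (3:ℝ) ^ k.natAbs := by
      have e1 : Real.exp ((l.natAbs : ℝ) * Real.log 2) = 2 ^ l.natAbs := by
        rw [Real.exp_nat_mul, Real.exp_log (by norm_num)]
      have e2 : Real.exp ((k.natAbs : ℝ) * Real.log 3) = 3 ^ k.natAbs := by
        rw [Real.exp_nat_mul, Real.exp_log (by norm_num)]
      rw [← e1, ← e2, keyabs]
    have hnat : (2:ℕ) ^ l.natAbs = 3 ^ k.natAbs := by
      have := hexp
      exact_mod_cast this
    have hpos : 0 < l.natAbs := Int.natAbs_pos.mpr hl0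
    have hdvd : 2 ∣ 3 ^ k.natAbs := by
      rw [← hnat]
      exact dvd_pow_self 2 hpos.ne'
    have := Nat.Prime.dvd_of_dvd_pow Nat.prime_two hdvd
    norm_num at this

/-- density of the orbit x·2^ℤ·3^ℤ -/
lemma exists_orbit_point {x c : ℝ} (hx : 0 < x) (hx1 : x ≤ 1) (hc : 0 < c) (hc1 : c < 1) :
    ∃ u : ℝ, c < u ∧ u < 1 ∧ ∃ p q : ℤ, u = x * 2 ^ p * 3 ^ q := by
  have hlc : Real.log c < 0 := Real.log_neg hc hc1
  have hne : (Set.Ioo (Real.log c - Real.log x) (-Real.log x)).Nonempty :=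
    ⟨Real.log c / 2 - Real.log x, by constructor <;> [linarith; linarith]⟩
  obtain ⟨s, hs, hsmem⟩ := log23_dense.exists_mem_open isOpen_Ioo hne
  rw [SetLike.mem_coe, AddSubgroup.mem_closure_pair] at hs
  obtain ⟨p, q, hpq⟩ := hs
  have e2 : Real.exp ((p:ℝ) * Real.log 2) = (2:ℝ) ^ p := by
    rw [mul_comm, ← Real.rpow_def_of_pos (by norm_num : (0:ℝ) < 2), Real.rpow_intCast]
  have e3 : Real.exp ((q:ℝ) * Real.log 3) = (3:ℝ) ^ q := by
    rw [mul_comm, ← Real.rpow_def_of_pos (by norm_num : (0:ℝ) < 3), Real.rpow_intCast]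
  have hu : Real.exp (Real.log x + s) = x * 2 ^ p * 3 ^ q := by
    rw [← hpq, zsmul_eq_mul, zsmul_eq_mul, Real.exp_add, Real.exp_add, Real.exp_log hx,
      e2, e3, mul_assoc]
  refine ⟨x * 2 ^ p * 3 ^ q, ?_, ?_, p, q, rfl⟩
  · rw [← hu]
    calc c = Real.exp (Real.log c) := (Real.exp_log hc).symm
      _ < Real.exp (Real.log x + s) := Real.exp_lt_exp.mpr (by have := hsmem.1; linarith)
  · rw [← hu]
    calc Real.exp (Real.log x + s) < Real.exp 0 :=
          Real.exp_lt_exp.mpr (by have := hsmem.2; linarith)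
      _ = 1 := Real.exp_zero

lemma smallg
    (hf : ∀ x ∈ Set.Ioo (0:ℝ) 1, ∀ y ∈ Set.Ioc (0:ℝ) 1,
      f (x * y) + f ((1 - x) * y) - f y = (f x + f (1 - x)) * y)
    (hlim : Filter.Tendsto f (nhdsWithin 1 (Set.Iio 1)) (nhds (f 1))) :
    ∀ ε > 0, ∃ δ > 0, ∀ u : ℝ, 1 - δ < u → u < 1 → |gg f u| < ε := by
  have hf1 : f 1 = 0 := f1zero hf
  rw [hf1] at hlim
  have hid : Filter.Tendsto (fun u : ℝ => u) (nhdsWithin 1 (Set.Iio 1)) (nhds 1) :=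
    Filter.Tendsto.mono_left Filter.tendsto_id nhdsWithin_le_nhds
  have hg : Filter.Tendsto (gg f) (nhdsWithin 1 (Set.Iio 1)) (nhds 0) := by
    have := Filter.Tendsto.div hlim hid one_ne_zero
    simp only [zero_div] at this; exact this
  intro ε hε
  rw [Metric.tendsto_nhdsWithin_nhds] at hg
  obtain ⟨δ, hδ, hd⟩ := hg ε hε
  refine ⟨δ, hδ, ?_⟩
  intro u hu1 hu2
  have := hd (show u ∈ Set.Iio 1 from hu2) (show dist u 1 < δ by
    rw [Real.dist_eq, abs_of_nonpos (by linarith)]; linarith)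
  rwa [Real.dist_eq, sub_zero] at this

lemma orbitH
    (hf : ∀ x ∈ Set.Ioo (0:ℝ) 1, ∀ y ∈ Set.Ioc (0:ℝ) 1,
      f (x * y) + f ((1 - x) * y) - f y = (f x + f (1 - x)) * y) :
    ∀ x ∈ Set.Ioc (0:ℝ) 1, ∀ c : ℝ, 0 < c → c < 1 →
      ∃ u, c < u ∧ u < 1 ∧ ∀ z ∈ Set.Ioc (0:ℝ) 1, HH f u z = HH f x z := by
  intro x hx c hc hc1
  obtain ⟨u, hcu, hu1, p, q, hu⟩ := exists_orbit_point hx.1 hx.2 hc hc1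
  refine ⟨u, hcu, hu1, ?_⟩
  intro z hz
  have hu01 : u ∈ Set.Ioc (0:ℝ) 1 := ⟨lt_trans hc hcu, hu1.le⟩
  have e2 : (2:ℝ) ^ p * (2:ℝ) ^ ((-p).toNat) = (2:ℝ) ^ (p.toNat) := by
    rw [← zpow_natCast (2:ℝ) (-p).toNat, ← zpow_natCast (2:ℝ) p.toNat,
      ← zpow_add₀ (two_ne_zero)]
    congr 1
    omega
  have e3 : (3:ℝ) ^ q * (3:ℝ) ^ ((-q).toNat) = (3:ℝ) ^ (q.toNat) := by
    rw [← zpow_natCast (3:ℝ) (-q).toNat, ← zpow_natCast (3:ℝ) q.toNat,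
      ← zpow_add₀ (by norm_num : (3:ℝ) ≠ 0)]
    congr 1
    omega
  have harg : u / 2 ^ (p.toNat) / 3 ^ (q.toNat) = x / 2 ^ ((-p).toNat) / 3 ^ ((-q).toNat) := by
    rw [div_div, div_div, div_eq_div_iff (by positivity) (by positivity), hu]
    calc x * (2:ℝ) ^ p * (3:ℝ) ^ q * ((2:ℝ) ^ ((-p).toNat) * (3:ℝ) ^ ((-q).toNat))
        = x * ((2:ℝ) ^ p * (2:ℝ) ^ ((-p).toNat)) * ((3:ℝ) ^ q * (3:ℝ) ^ ((-q).toNat)) := by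
          ring
      _ = x * (2:ℝ) ^ (p.toNat) * (3:ℝ) ^ (q.toNat) := by rw [e2, e3]
      _ = x * ((2:ℝ) ^ (p.toNat) * (3:ℝ) ^ (q.toNat)) := by ring
  rw [← hpow hf p.toNat q.toNat u hu01 z hz, harg, hpow hf (-p).toNat (-q).toNat x hx z hz]

lemma Hzero
    (hf : ∀ x ∈ Set.Ioo (0:ℝ) 1, ∀ y ∈ Set.Ioc (0:ℝ) 1,
      f (x * y) + f ((1 - x) * y) - f y = (f x + f (1 - x)) * y)
    (hlim : Filter.Tendsto f (nhdsWithin 1 (Set.Iio 1)) (nhds (f 1))) :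
    ∀ x ∈ Set.Ioc (0:ℝ) 1, ∀ y ∈ Set.Ioc (0:ℝ) 1, HH f x y = 0 := by
  intro x hx y hy
  have key : ∀ ε : ℝ, 0 < ε → |HH f x y| < 3 * ε := by
    intro ε hε
    obtain ⟨δ, hδ, hA⟩ := smallg hf hlim ε hε
    set c : ℝ := max (1 - δ/2) (1/2) with hcdef
    have hc0 : (0:ℝ) < c := lt_of_lt_of_le (by norm_num) (le_max_right _ _)
    have hc1 : c < 1 := by
      rw [hcdef]
      apply max_lt (by linarith) (by norm_num)
    have hcδ : 1 - δ ≤ c := le_trans (by linarith) (le_max_left _ _)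
    have hc2 : 1 - δ ≤ c * c := by
      rcases le_total (1 - δ/2) (1/2 : ℝ) with h | h
      · have hcc : c = 1/2 := max_eq_right h
        rw [hcc]; nlinarith
      · have hcc : c = 1 - δ/2 := max_eq_left h
        rw [hcc]; nlinarith
    obtain ⟨u, hcu, hu1, hux⟩ := orbitH hf x hx c hc0 hc1
    obtain ⟨v, hcv, hv1, hvy⟩ := orbitH hf y hy c hc0 hc1
    have hu01 : u ∈ Set.Ioc (0:ℝ) 1 := ⟨hc0.trans hcu, hu1.le⟩
    have hv01 : v ∈ Set.Ioc (0:ℝ) 1 := ⟨hc0.trans hcv, hv1.le⟩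
    have e : HH f x y = HH f u v := by
      rw [← hux y hy, Hsym, ← hvy u hu01, Hsym]
    have b1 : |gg f u| < ε := hA u (by linarith) hu1
    have b2 : |gg f v| < ε := hA v (by linarith) hv1
    have buv : |gg f (u * v)| < ε := by
      apply hA
      · nlinarith
      · nlinarith
    rw [e]
    simp only [HH]
    have t1 : |gg f (u*v) - gg f u - gg f v| ≤ |gg f (u*v) - gg f u| + |gg f v| :=
      abs_sub _ _
    have t2 : |gg f (u*v) - gg f u| ≤ |gg f (u*v)| + |gg f u| := abs_sub _ _
    linarith
  by_contra hne
  have hpos : 0 < |HH f x y| / 3 := by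
    have := abs_pos.mpr hne
    linarith
  have := key (|HH f x y| / 3) hpos
  linarith

lemma cauchy_lin (ψ : ℝ → ℝ) (h0 : ψ 0 = 0)
    (hadd : ∀ s, 0 ≤ s → ∀ t, 0 ≤ t → ψ (s + t) = ψ s + ψ t)
    (hsmall : ∀ ε > 0, ∃ δ > 0, ∀ r, 0 ≤ r → r < δ → |ψ r| < ε) :
    ∀ t, 0 ≤ t → ψ t = t * ψ 1 := by
  have hnat : ∀ n : ℕ, ∀ t, 0 ≤ t → ψ ((n:ℝ) * t) = (n:ℝ) * ψ t := by
    intro n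
    induction n with
    | zero => intro t ht; simpa using h0
    | succ n ih =>
      intro t ht
      push_cast
      rw [show ((n:ℝ) + 1) * t = (n:ℝ)*t + t by ring,
        hadd ((n:ℝ)*t) (by positivity) t ht, ih t ht]
      ring
  intro t ht
  have key : ∀ ε : ℝ, 0 < ε → |ψ t - t * ψ 1| < ε := by
    intro ε hε
    obtain ⟨δ, hδ, hsm⟩ := hsmall (ε/2) (by linarith)
    obtain ⟨n, hn⟩ := exists_nat_gt (max (1/δ) ((|ψ 1| + 1) * (2/ε)))
    have hn1 : 1/δ < (n:ℝ) := lt_of_le_of_lt (le_max_left _ _) hn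
    have hn2 : (|ψ 1| + 1) * (2/ε) < (n:ℝ) := lt_of_le_of_lt (le_max_right _ _) hn
    have hn0 : (0:ℝ) < n := lt_trans (by positivity) hn1
    set k := ⌊(n:ℝ) * t⌋₊ with hkdef
    have hk1 : (k:ℝ) ≤ (n:ℝ) * t := Nat.floor_le (by positivity)
    have hk2 : (n:ℝ) * t < (k:ℝ) + 1 := Nat.lt_floor_add_one _
    have hq0 : (0:ℝ) ≤ (k:ℝ)/(n:ℝ) := by positivity
    have hr0 : 0 ≤ t - (k:ℝ)/(n:ℝ) := by
      rw [sub_nonneg, div_le_iff₀ hn0]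
      linarith
    have hr1 : t - (k:ℝ)/(n:ℝ) < 1/(n:ℝ) := by
      have h1 : t < ((k:ℝ)+1)/(n:ℝ) := by rw [lt_div_iff₀ hn0]; linarith
      have h2 : ((k:ℝ)+1)/(n:ℝ) = (k:ℝ)/(n:ℝ) + 1/(n:ℝ) := by ring
      linarith
    have hδn : 1/(n:ℝ) < δ := by
      rw [div_lt_iff₀ hn0]
      calc (1:ℝ) = δ * (1/δ) := by field_simp
        _ < δ * n := by exact mul_lt_mul_of_pos_left hn1 hδ
    have e1 : ψ t = ψ ((k:ℝ)/(n:ℝ)) + ψ (t - (k:ℝ)/(n:ℝ)) := by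
      have h := hadd ((k:ℝ)/(n:ℝ)) hq0 (t - (k:ℝ)/(n:ℝ)) hr0
      rw [show (k:ℝ)/(n:ℝ) + (t - (k:ℝ)/(n:ℝ)) = t by ring] at h
      exact h
    have e2 : ψ ((k:ℝ)/(n:ℝ)) = (k:ℝ) * ψ (1/(n:ℝ)) := by
      have h := hnat k (1/(n:ℝ)) (by positivity)
      rw [show (k:ℝ) * (1/(n:ℝ)) = (k:ℝ)/(n:ℝ) by ring] at h
      exact h
    have e3 : ψ 1 = (n:ℝ) * ψ (1/(n:ℝ)) := by
      have h := hnat n (1/(n:ℝ)) (by positivity)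
      rw [show (n:ℝ) * (1/(n:ℝ)) = 1 by field_simp] at h
      exact h
    have e4 : ψ (1/(n:ℝ)) = ψ 1 / (n:ℝ) := by
      rw [e3]
      field_simp
    have bd1 : |ψ (t - (k:ℝ)/(n:ℝ))| < ε/2 := hsm _ hr0 (lt_trans hr1 hδn)
    have bd2 : |((n:ℝ)*t - (k:ℝ)) * (ψ 1 / (n:ℝ))| ≤ ε/2 := by
      rw [abs_mul, abs_div]
      have h1 : |(n:ℝ)*t - (k:ℝ)| ≤ 1 := by
        rw [abs_le]
        constructor <;> linarith
      have hml := mul_lt_mul_of_pos_left hn2 (show (0:ℝ) < ε/2 by linarith)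
      have h3 : (ε/2) * ((|ψ 1| + 1) * (2/ε)) = |ψ 1| + 1 := by
        field_simp
      have h2 : |ψ 1| / |(n:ℝ)| ≤ ε/2 := by
        rw [abs_of_pos hn0, div_le_iff₀ hn0]
        nlinarith [abs_nonneg (ψ 1)]
      calc |(n:ℝ)*t - (k:ℝ)| * (|ψ 1| / |(n:ℝ)|) ≤ 1 * (|ψ 1| / |(n:ℝ)|) :=
            mul_le_mul_of_nonneg_right h1 (by positivity)
        _ = |ψ 1| / |(n:ℝ)| := by ring
        _ ≤ ε/2 := h2
    have eq5 : ψ t - t * ψ 1 = ψ (t - (k:ℝ)/(n:ℝ)) - ((n:ℝ)*t - (k:ℝ)) * (ψ 1 / (n:ℝ)) := by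
      rw [e1, e2, e4, e3]
      field_simp
      ring
    rw [eq5]
    calc |ψ (t - (k:ℝ)/(n:ℝ)) - ((n:ℝ)*t - (k:ℝ)) * (ψ 1 / (n:ℝ))|
        ≤ |ψ (t - (k:ℝ)/(n:ℝ))| + |((n:ℝ)*t - (k:ℝ)) * (ψ 1 / (n:ℝ))| := abs_sub _ _
      _ < ε := by linarith
  by_contra hne
  have hpos : 0 < |ψ t - t * ψ 1| := abs_pos.mpr (sub_ne_zero.mpr hne)
  exact absurd (key _ hpos) (lt_irrefl _)

end Stmt7Aux

theorem stmt_7 (f : ℝ → ℝ)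
    (hmeas : Measurable fun x : Set.Ioc (0:ℝ) 1 => f x)
    (hf : ∀ x ∈ Set.Ioo (0:ℝ) 1, ∀ y ∈ Set.Ioc (0:ℝ) 1,
      f (x * y) + f ((1 - x) * y) - f y = (f x + f (1 - x)) * y)
    (hlim : Filter.Tendsto f (nhdsWithin 1 (Set.Iio 1)) (nhds (f 1))) :
    ∃ c : ℝ, ∀ x ∈ Set.Ioc (0:ℝ) 1, f x = c * x * Real.log x := by
  open Stmt7Aux in
  have hf1 : f 1 = 0 := Stmt7Aux.f1zero hf
  have gadd : ∀ x ∈ Set.Ioc (0:ℝ) 1, ∀ y ∈ Set.Ioc (0:ℝ) 1,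
      Stmt7Aux.gg f (x * y) = Stmt7Aux.gg f x + Stmt7Aux.gg f y := by
    intro x hx y hy
    have h := Stmt7Aux.Hzero hf hlim x hx y hy
    simp only [Stmt7Aux.HH] at h
    linarith
  set ψ : ℝ → ℝ := fun t => Stmt7Aux.gg f (Real.exp (-t)) with hψdef
  have hmemexp : ∀ s : ℝ, 0 ≤ s → Real.exp (-s) ∈ Set.Ioc (0:ℝ) 1 := by
    intro s hs
    refine ⟨Real.exp_pos _, ?_⟩
    rw [Real.exp_le_one_iff]
    linarith
  have hψ0 : ψ 0 = 0 := by
    simp [hψdef, Stmt7Aux.gg, hf1]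
  have hψadd : ∀ s, 0 ≤ s → ∀ t, 0 ≤ t → ψ (s + t) = ψ s + ψ t := by
    intro s hs t ht
    have h : ψ (s + t) = Stmt7Aux.gg f (Real.exp (-s) * Real.exp (-t)) := by
      rw [hψdef]
      simp only []
      rw [neg_add, Real.exp_add]
    rw [h, gadd _ (hmemexp s hs) _ (hmemexp t ht)]
  have hψsmall : ∀ ε > 0, ∃ δ > 0, ∀ r, 0 ≤ r → r < δ → |ψ r| < ε := by
    intro ε hε
    obtain ⟨δA, hδA, hA⟩ := Stmt7Aux.smallg hf hlim ε hε
    refine ⟨δA, hδA, ?_⟩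
    intro r hr0 hrδ
    rcases eq_or_lt_of_le hr0 with h | h
    · rw [← h, hψ0]
      simpa using hε
    · apply hA
      · have h1 : 1 - r ≤ Real.exp (-r) := by
          have := Real.add_one_le_exp (-r)
          linarith
        linarith
      · calc Real.exp (-r) < Real.exp 0 := Real.exp_lt_exp.mpr (by linarith)
          _ = 1 := Real.exp_zero
  have hmain := Stmt7Aux.cauchy_lin ψ hψ0 hψadd hψsmall
  refine ⟨-(ψ 1), ?_⟩
  intro x hx
  have ht : 0 ≤ -Real.log x := by
    have := Real.log_nonpos hx.1.le hx.2
    linarith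
  have hex : Real.exp (-(-Real.log x)) = x := by
    rw [neg_neg, Real.exp_log hx.1]
  have h1 := hmain (-Real.log x) ht
  have hgx : Stmt7Aux.gg f x = (-Real.log x) * ψ 1 := by
    have hx2 : ψ (-Real.log x) = Stmt7Aux.gg f x := by
      rw [hψdef]
      simp only []
      rw [hex]
    rw [← hx2]
    exact h1
  have hx0 : x ≠ 0 := ne_of_gt hx.1
  have hfx : f x = x * Stmt7Aux.gg f x := by
    simp only [Stmt7Aux.gg]
    field_simp
  rw [hfx, hgx]
  ring
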